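/- Sugawara-type Virasoro field for the degree-zero subalgebra: let g_0 = ⊕_{s=0}^m g'_s be a finite-dimensional reductive Lie (super)algebra with g'_0 its center and g'_s simple for s > 0, equipped with an invariant form τ such that on each g'_s one has τ = (k + h^∨ − r_s)(·|·) with k + h^∨ − r_s ≠ 0 appropriately, where κ_{g_0} = 2r_s(·|·) on g'_s and r_0 = 0. Then L(z) = (1/(2(k+h^∨))) Σ_i :J^{u^i}(z) J^{u_i}(z): is a Virasoro field on the affine vertex superalgebra V^τ(g_0), where {u_i} and {u^i} are dual bases of g_0 with respect to (·|·). -/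

import Mathlib

open scoped BigOperators

/-- Generalized binomial coefficient `binom m j` for integer upper index `m`. -/
noncomputable def zbinom (m : ℤ) (j : ℕ) : ℂ :=
  (∏ i ∈ Finset.range j, ((m : ℂ) - (i : ℂ))) / (Nat.factorial j : ℂ)

/-- A bare-bones vertex superalgebra: `mul n a b` is the `n`-th product `a₍ₙ₎b`, `vac`
the vacuum, `T` the translation operator and `pt` the parity (of homogeneous elements).
The axioms are the vacuum and translation axioms, skew-symmetry and the Borcherds
commutator formula. -/
structure SVA (V : Type*) [AddCommGroup V] [Module ℂ V] where
  mul : ℤ → V →ₗ[ℂ] V →ₗ[ℂ] V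
  vac : V
  T : V →ₗ[ℂ] V
  pt : V → ZMod 2
  pt_vac : pt vac = 0
  pt_T : ∀ a, pt (T a) = pt a
  trunc : ∀ a b : V, ∃ N : ℕ, ∀ n : ℤ, (N : ℤ) ≤ n → mul n a b = 0
  vac_left_neg_one : ∀ a, mul (-1) vac a = a
  vac_left : ∀ a (n : ℤ), n ≠ -1 → mul n vac a = 0
  vac_right : ∀ a, mul (-1) a vac = a
  vac_right_pos : ∀ a (n : ℤ), 0 ≤ n → mul n a vac = 0
  T_eq : ∀ a, mul (-2) a vac = T a
  T_vac : T vac = 0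
  T_left : ∀ a b (n : ℤ), mul n (T a) b = (-(n : ℂ)) • mul (n - 1) a b
  T_der : ∀ a b (n : ℤ), T (mul n a b) = mul n (T a) b + mul n a (T b)
  skew : ∀ a b (n : ℤ), mul n a b =
    ((-1 : ℂ) ^ ((pt a * pt b).val)) •
      ∑ᶠ j : ℕ, ((-1 : ℂ) ^ (n + (j : ℤ) + 1)) •
        (((Nat.factorial j : ℂ))⁻¹ • (T ^ j) (mul (n + (j : ℤ)) b a))
  comm : ∀ a b c (m n : ℤ),
    mul m a (mul n b c) - ((-1 : ℂ) ^ ((pt a * pt b).val)) • mul n b (mul m a c) =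
      ∑ᶠ j : ℕ, zbinom m j • mul (m + n - (j : ℤ)) (mul (j : ℤ) a b) c

/-- `C₂(V)`: the span of all elements of the form `a₍₋₂₎c`. -/
noncomputable def SVA.C2 {V : Type*} [AddCommGroup V] [Module ℂ V] (S : SVA V) :
    Submodule ℂ V :=
  Submodule.span ℂ {x : V | ∃ a c : V, x = S.mul (-2) a c}

lemma zbinom_zero' (m : ℤ) : zbinom m 0 = 1 := by simp [zbinom]
lemma zbinom_one' (m : ℤ) : zbinom m 1 = (m : ℂ) := by simp [zbinom]

lemma finsum_eq_add01 {V : Type*} [AddCommMonoid V] (f : ℕ → V) (h : ∀ j, 2 ≤ j → f j = 0) :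
    ∑ᶠ j, f j = f 0 + f 1 := by
  rw [finsum_eq_finset_sum_of_support_subset f (s := {0, 1}) ?h]
  · rw [Finset.sum_pair (by norm_num)]
  · intro j hj
    simp only [Function.mem_support] at hj
    simp only [Finset.coe_insert, Finset.coe_singleton, Set.mem_insert_iff,
      Set.mem_singleton_iff]
    by_contra hc
    push_neg at hc
    exact hj (h j (by omega))

section Helpers
variable {g0 : Type*} [LieRing g0] [LieAlgebra ℂ g0] {ι : Type*} [Fintype ι]
  (B : g0 →ₗ[ℂ] g0 →ₗ[ℂ] ℂ) (u u' : ι → g0)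

lemma dual_nondeg (hdual : ∀ x : g0, ∑ i, B x (u i) • u' i = x)
    (w : g0) (hw : ∀ z, B w z = 0) : w = 0 := by
  have h := hdual w
  simp only [hw, zero_smul, Finset.sum_const_zero] at h
  exact h.symm

lemma dual_swap (hBsym : ∀ x y : g0, B x y = B y x)
    (hdual : ∀ x : g0, ∑ i, B x (u i) • u' i = x)
    (x : g0) : ∑ i, B x (u' i) • u i = x := by
  have key : ∀ z : g0, B ((∑ i, B x (u' i) • u i) - x) z = 0 := by
    intro z
    have h1 : B ((∑ i, B x (u' i) • u i)) z = ∑ i, B x (u' i) * B (u i) z := by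
      simp [map_sum, LinearMap.sum_apply, LinearMap.smul_apply, smul_eq_mul]
    have h2 : ∑ i, B x (u' i) * B (u i) z = B x z := by
      calc ∑ i, B x (u' i) * B (u i) z = ∑ i, B z (u i) * B x (u' i) := by
            refine Finset.sum_congr rfl fun i _ => ?_
            rw [hBsym (u i) z]; ring
      _ = B x (∑ i, B z (u i) • u' i) := by
            simp [map_sum, map_smul, smul_eq_mul, mul_comm]
      _ = B x z := by rw [hdual z]
    simp [map_sub, LinearMap.sub_apply, h1, h2]
  have := dual_nondeg B u u' hdual _ key
  exact sub_eq_zero.mp this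

lemma copair_symm {M : Type*} [AddCommGroup M] [Module ℂ M]
    (hBsym : ∀ x y : g0, B x y = B y x)
    (hdual : ∀ x : g0, ∑ i, B x (u i) • u' i = x)
    (F : g0 →ₗ[ℂ] g0 →ₗ[ℂ] M) :
    ∑ i, F (u' i) (u i) = ∑ i, F (u i) (u' i) := by
  have hd' := dual_swap B u u' hBsym hdual
  have hL : ∑ i, F (u' i) (u i) = ∑ i, ∑ j, B (u' i) (u' j) • F (u j) (u i) := by
    refine Finset.sum_congr rfl fun i _ => ?_
    conv_lhs => rw [← hd' (u' i)]
    simp [map_sum, LinearMap.sum_apply, map_smul, LinearMap.smul_apply]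
  have hR : ∑ i, F (u i) (u' i) = ∑ i, ∑ j, B (u' i) (u' j) • F (u i) (u j) := by
    refine Finset.sum_congr rfl fun i _ => ?_
    conv_lhs => rw [← hd' (u' i)]
    simp [map_sum, map_smul]
  rw [hL, hR, Finset.sum_comm]
  refine Finset.sum_congr rfl fun i _ => Finset.sum_congr rfl fun j _ => ?_
  rw [hBsym (u' j) (u' i)]

lemma swap_bracket {M : Type*} [AddCommGroup M] [Module ℂ M]
    (hBsym : ∀ x y : g0, B x y = B y x)
    (hBinv : ∀ x y z : g0, B ⁅x, y⁆ z = B x ⁅y, z⁆)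
    (hdual : ∀ x : g0, ∑ i, B x (u i) • u' i = x)
    (F : g0 →ₗ[ℂ] g0 →ₗ[ℂ] M) (x : g0) :
    ∑ i, F ⁅x, u' i⁆ (u i) = - ∑ i, F (u' i) ⁅x, u i⁆ := by
  have hd' := dual_swap B u u' hBsym hdual
  have hB' : ∀ a b : g0, B ⁅x, a⁆ b = - B a ⁅x, b⁆ := by
    intro a b
    have h1 : B a ⁅x, b⁆ = B ⁅a, x⁆ b := (hBinv a x b).symm
    rw [h1, ← lie_skew x a, map_neg]
    simp
  have hL : ∑ i, F ⁅x, u' i⁆ (u i)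
      = ∑ i, ∑ j, B ⁅x, u' i⁆ (u j) • F (u' j) (u i) := by
    refine Finset.sum_congr rfl fun i _ => ?_
    conv_lhs => rw [← hdual ⁅x, u' i⁆]
    simp [map_sum, LinearMap.sum_apply, map_smul, LinearMap.smul_apply]
  rw [hL, Finset.sum_comm, ← Finset.sum_neg_distrib]
  refine Finset.sum_congr rfl fun j _ => ?_
  have e1 : ∀ i, B ⁅x, u' i⁆ (u j) = -(B ⁅x, u j⁆ (u' i)) := by
    intro i
    rw [hB' (u' i) (u j), hBsym (u' i) ⁅x, u j⁆]
  calc ∑ i, B ⁅x, u' i⁆ (u j) • F (u' j) (u i)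
      = ∑ i, -(B ⁅x, u j⁆ (u' i) • F (u' j) (u i)) := by
        refine Finset.sum_congr rfl fun i _ => by rw [e1 i, neg_smul]
    _ = -(F (u' j) (∑ i, B ⁅x, u j⁆ (u' i) • u i)) := by
        rw [Finset.sum_neg_distrib, map_sum]
        simp [map_smul]
    _ = - F (u' j) ⁅x, u j⁆ := by rw [hd']

lemma blocks_forall {m : ℕ} {gs : ℕ → Submodule ℂ g0}
    (hdirect : DirectSum.IsInternal fun s : Fin (m + 1) => gs (s : ℕ))
    (p : Submodule ℂ g0) (h : ∀ s ≤ m, ∀ x ∈ gs s, x ∈ p) (x : g0) : x ∈ p := by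
  have htop : (⨆ s : Fin (m + 1), gs (s : ℕ)) = ⊤ := hdirect.submodule_iSup_eq_top
  have hle : (⊤ : Submodule ℂ g0) ≤ p := by
    rw [← htop]
    exact iSup_le fun s y hy => h s (Nat.lt_succ_iff.mp s.isLt) y hy
  exact hle trivial

lemma blocks_disjoint {m : ℕ} {gs : ℕ → Submodule ℂ g0}
    (hdirect : DirectSum.IsInternal fun s : Fin (m + 1) => gs (s : ℕ))
    {s t : ℕ} (hs : s ≤ m) (ht : t ≤ m) (hst : s ≠ t)
    {x : g0} (hxs : x ∈ gs s) (hxt : x ∈ gs t) : x = 0 := by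
  have hd := hdirect.submodule_iSupIndep.pairwiseDisjoint
  have hdisj : Disjoint (gs s) (gs t) := by
    have h2 := hd (i := (⟨s, by omega⟩ : Fin (m + 1))) (j := (⟨t, by omega⟩ : Fin (m + 1)))
      (by simp only [ne_eq, Fin.mk.injEq]; exact hst)
    simpa using h2
  exact Submodule.disjoint_def.mp hdisj x hxs hxt

lemma trace_formula [FiniteDimensional ℂ g0]
    (hdual : ∀ x : g0, ∑ i, B x (u i) • u' i = x)
    (f : g0 →ₗ[ℂ] g0) :
    LinearMap.trace ℂ g0 f = ∑ i, B (f (u' i)) (u i) := by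
  have hf : f = ∑ i, dualTensorHom ℂ g0 g0 ((B.flip (u i)) ⊗ₜ[ℂ] f (u' i)) := by
    ext x
    simp only [LinearMap.sum_apply, dualTensorHom_apply, LinearMap.flip_apply]
    conv_lhs => rw [← hdual x]
    rw [map_sum]
    simp [map_smul]
  conv_lhs => rw [hf]
  rw [map_sum]
  refine Finset.sum_congr rfl fun i _ => ?_
  rw [LinearMap.trace_eq_contract_apply, contractLeft_apply, LinearMap.flip_apply]

end Helpers

/-- Sugawara-type Virasoro field for the degree-zero subalgebra: let
`g₀ = ⊕_{s=0}^m g'_s` be reductive (`g'₀` the center, `g'_s` ideals for `s ≥ 1`) with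
invariant form `B` such that the Killing form of `g₀` is `2 r_s B` on `g'_s` and the
level form is `τ = (k + h^∨ − r_s) B` on `g'_s`.  Then
`L = (1/(2(k+h^∨))) ∑_i :J^{uⁱ} J^{u_i}:` (dual bases w.r.t. `B`) is a Virasoro field on
`V^τ(g₀)`: `[L_λ L] = (∂ + 2λ)L + (c/12)λ³` for some central charge `c`. -/
theorem sugawara_virasoro
    {g0 : Type*} [LieRing g0] [LieAlgebra ℂ g0] [FiniteDimensional ℂ g0]
    {V : Type*} [AddCommGroup V] [Module ℂ V] (S : SVA V)
    (J : g0 →ₗ[ℂ] V)                      -- the currents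
    (B : g0 →ₗ[ℂ] g0 →ₗ[ℂ] ℂ)             -- the normalized invariant form (·|·)
    (k hv : ℂ) (hknc : k + hv ≠ 0)
    (m : ℕ) (gs : ℕ → Submodule ℂ g0) (r : ℕ → ℂ) (hr0 : r 0 = 0)
    (hdirect : DirectSum.IsInternal fun s : Fin (m + 1) => gs (s : ℕ))
    (hcenter : ∀ x ∈ gs 0, ∀ y : g0, ⁅x, y⁆ = 0)
    (hideal : ∀ s ≤ m, ∀ x ∈ gs s, ∀ y : g0, ⁅x, y⁆ ∈ gs s)
    (hBinv : ∀ x y z : g0, B ⁅x, y⁆ z = B x ⁅y, z⁆)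
    (hBsym : ∀ x y : g0, B x y = B y x)
    (horth : ∀ s ≤ m, ∀ t ≤ m, s ≠ t → ∀ x ∈ gs s, ∀ y ∈ gs t, B x y = 0)
    -- `κ_{g₀} = 2 r_s (·|·)` on `g'_s`
    (hkilling : ∀ s ≤ m, ∀ x ∈ gs s, ∀ y ∈ gs s,
      LinearMap.trace ℂ g0 ((LieAlgebra.ad ℂ g0 x) ∘ₗ (LieAlgebra.ad ℂ g0 y)) = 2 * r s * B x y)
    (hnz : ∀ s ≤ m, k + hv - r s ≠ 0)
    -- currents of `V^τ(g₀)`: `[J^x_λ J^y] = J^{[x,y]} + τ(x|y)λ`, with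
    -- `τ = (k + h^∨ − r_s)(·|·)` on `g'_s`
    (hpt : ∀ x : g0, S.pt (J x) = 0)
    (hcur0 : ∀ x y : g0, S.mul 0 (J x) (J y) = J ⁅x, y⁆)
    (hcur1 : ∀ s ≤ m, ∀ x ∈ gs s, ∀ y ∈ gs s,
      S.mul 1 (J x) (J y) = ((k + hv - r s) * B x y) • S.vac)
    (hcur1orth : ∀ s ≤ m, ∀ t ≤ m, s ≠ t → ∀ x ∈ gs s, ∀ y ∈ gs t,
      S.mul 1 (J x) (J y) = 0)
    (hcurm : ∀ x y : g0, ∀ mm : ℤ, 2 ≤ mm → S.mul mm (J x) (J y) = 0)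
    -- dual bases of `g₀` with respect to `(·|·)`
    {ι : Type*} [Fintype ι] (u u' : ι → g0)
    (hdual : ∀ x : g0, ∑ i, B x (u i) • u' i = x) :
    ∃ c : ℂ,
      (fun L =>
        S.mul 0 L L = S.T L ∧
        S.mul 1 L L = (2 : ℂ) • L ∧
        S.mul 2 L L = 0 ∧
        S.mul 3 L L = (c / 2) • S.vac ∧
        ∀ mm : ℤ, 4 ≤ mm → S.mul mm L L = 0)
      ((2 * (k + hv))⁻¹ • ∑ i, S.mul (-1) (J (u' i)) (J (u i))) := by
  classical
  have hd' : ∀ x : g0, ∑ i, B x (u' i) • u i = x := dual_swap B u u' hBsym hdual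
  set K : ℂ := 2 * (k + hv) with hK
  have hKne : K ≠ 0 := mul_ne_zero two_ne_zero hknc
  set L' : V := ∑ i, S.mul (-1) (J (u' i)) (J (u i)) with hL'
  -- τ on blocks
  have hA : ∀ s ≤ m, ∀ x ∈ gs s, ∀ y : g0,
      S.mul 1 (J x) (J y) = ((k + hv - r s) * B x y) • S.vac := by
    intro s hs x hx y
    have hmem := blocks_forall hdirect
      (p := LinearMap.eqLocus ((S.mul 1 (J x)) ∘ₗ J)
        (LinearMap.smulRight ((k + hv - r s) • (B x)) S.vac)) ?_ y
    · simpa [LinearMap.mem_eqLocus, LinearMap.smulRight_apply, LinearMap.smul_apply,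
        smul_eq_mul] using hmem
    · intro t ht z hz
      simp only [LinearMap.mem_eqLocus, LinearMap.coe_comp, Function.comp_apply,
        LinearMap.smulRight_apply, LinearMap.smul_apply, smul_eq_mul]
      by_cases hts : t = s
      · subst hts; exact hcur1 t ht x hx z hz
      · rw [hcur1orth s hs t ht (fun h => hts h.symm) x hx z hz,
          horth s hs t ht (fun h => hts h.symm) x hx z hz]
        simp
  have hA' : ∀ s ≤ m, ∀ y ∈ gs s, ∀ x : g0,
      S.mul 1 (J x) (J y) = ((k + hv - r s) * B x y) • S.vac := by
    intro s hs y hy x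
    have hmem := blocks_forall hdirect
      (p := LinearMap.eqLocus (((S.mul 1).flip (J y)) ∘ₗ J)
        (LinearMap.smulRight ((k + hv - r s) • (B.flip y)) S.vac)) ?_ x
    · simpa [LinearMap.mem_eqLocus, LinearMap.smulRight_apply, LinearMap.smul_apply,
        smul_eq_mul, LinearMap.flip_apply] using hmem
    · intro t ht z hz
      simp only [LinearMap.mem_eqLocus, LinearMap.coe_comp, Function.comp_apply,
        LinearMap.smulRight_apply, LinearMap.smul_apply, smul_eq_mul, LinearMap.flip_apply]
      by_cases hts : t = s
      · subst hts; exact hcur1 t ht z hz y hy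
      · rw [hcur1orth t ht s hs hts z hz y hy, horth t ht s hs hts z hz y hy]
        simp
  have hsym1 : ∀ a b : g0, S.mul 1 (J a) (J b) = S.mul 1 (J b) (J a) := by
    intro a b
    have hmem := blocks_forall hdirect
      (p := LinearMap.eqLocus (((S.mul 1).flip (J b)) ∘ₗ J) ((S.mul 1 (J b)) ∘ₗ J)) ?_ a
    · simpa [LinearMap.mem_eqLocus, LinearMap.flip_apply] using hmem
    · intro s hs z hz
      simp only [LinearMap.mem_eqLocus, LinearMap.coe_comp, Function.comp_apply,
        LinearMap.flip_apply]
      rw [hA s hs z hz b, hA' s hs z hz b, hBsym z b]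
  have hspan : ∀ a b : g0, S.mul 1 (J a) (J b) ∈ (ℂ ∙ S.vac) := by
    intro a b
    have hmem := blocks_forall hdirect
      (p := Submodule.comap (((S.mul 1).flip (J b)) ∘ₗ J) (ℂ ∙ S.vac)) ?_ a
    · simpa using hmem
    · intro s hs z hz
      simp only [Submodule.mem_comap, LinearMap.coe_comp, Function.comp_apply,
        LinearMap.flip_apply]
      rw [hA s hs z hz b]
      exact Submodule.smul_mem _ _ (Submodule.mem_span_singleton_self _)
  -- ∑ ⁅u' i, u i⁆ = 0
  have hzero : ∑ i, ⁅u' i, u i⁆ = (0 : g0) := by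
    have h1 := copair_symm B u u' hBsym hdual
      (LinearMap.mk₂ ℂ (fun a b : g0 => ⁅a, b⁆) add_lie smul_lie lie_add lie_smul)
    simp only [LinearMap.mk₂_apply] at h1
    have h2 : ∑ i, ⁅u i, u' i⁆ = -∑ i, ⁅u' i, u i⁆ := by
      rw [← Finset.sum_neg_distrib]
      exact Finset.sum_congr rfl fun i _ => (lie_skew (u i) (u' i)).symm
    have h3 : (2 : ℂ) • ∑ i, ⁅u' i, u i⁆ = 0 := by
      rw [two_smul]
      nth_rewrite 2 [h1]
      rw [h2, add_neg_cancel]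
    exact (smul_eq_zero.mp h3).resolve_left two_ne_zero
  -- Casimir
  have hcas : ∀ t ≤ m, ∀ y ∈ gs t, ∑ i, ⁅⁅y, u' i⁆, u i⁆ = (2 * r t) • y := by
    intro t ht y hy
    set w : g0 := (∑ i, ⁅⁅y, u' i⁆, u i⁆) - (2 * r t) • y with hw
    have hBxw : ∀ x : g0, B x w = 0 := by
      intro x
      have hmem := blocks_forall hdirect (p := LinearMap.ker (B.flip w)) ?_ x
      · simpa using hmem
      · intro s hs z hz
        simp only [LinearMap.mem_ker, LinearMap.flip_apply]
        rw [hw, map_sub, map_smul]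
        by_cases hst : s = t
        · subst hst
          have htr : B z (∑ i, ⁅⁅y, u' i⁆, u i⁆)
              = LinearMap.trace ℂ g0 ((LieAlgebra.ad ℂ g0 z) ∘ₗ (LieAlgebra.ad ℂ g0 y)) := by
            rw [trace_formula B u u' hdual, map_sum]
            refine Finset.sum_congr rfl fun i _ => ?_
            rw [show ((LieAlgebra.ad ℂ g0 z) ∘ₗ (LieAlgebra.ad ℂ g0 y)) (u' i)
                = ⁅z, ⁅y, u' i⁆⁆ from rfl]
            rw [hBinv z ⁅y, u' i⁆ (u i)]
          rw [htr, hkilling s hs z hz y hy]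
          simp only [smul_eq_mul]
          ring
        · have hbz : ∀ i : ι, ⁅z, ⁅y, u' i⁆⁆ = 0 := by
            intro i
            have h1 : ⁅y, u' i⁆ ∈ gs t := hideal t ht y hy (u' i)
            have h2 : ⁅z, ⁅y, u' i⁆⁆ ∈ gs s := hideal s hs z hz _
            have h3 : ⁅z, ⁅y, u' i⁆⁆ ∈ gs t := by
              rw [← lie_skew]
              exact Submodule.neg_mem _ (hideal t ht _ h1 z)
            exact blocks_disjoint hdirect hs ht hst h2 h3
          have htr0 : B z (∑ i, ⁅⁅y, u' i⁆, u i⁆) = 0 := by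
            rw [map_sum]
            refine Finset.sum_eq_zero fun i _ => ?_
            rw [← hBinv z ⁅y, u' i⁆ (u i), hbz i]
            simp
          rw [htr0, horth s hs t ht hst z hz y hy]
          simp
    have hw0 : w = 0 := dual_nondeg B u u' hdual w (fun z => by rw [hBsym]; exact hBxw z)
    have h5 : (∑ i, ⁅⁅y, u' i⁆, u i⁆) - (2 * r t) • y = 0 := by rw [← hw]; exact hw0
    exact sub_eq_zero.mp h5
  -- generic commutator expansion for currents against a quadratic term
  have hcomm0 : ∀ (x : g0) (i : ι) (mm : ℤ),
      S.mul mm (J x) (S.mul (-1) (J (u' i)) (J (u i))) =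
        S.mul (-1) (J (u' i)) (S.mul mm (J x) (J (u i)))
          + S.mul (mm - 1) (S.mul 0 (J x) (J (u' i))) (J (u i))
          + (mm : ℂ) • S.mul (mm - 2) (S.mul 1 (J x) (J (u' i))) (J (u i)) := by
    intro x i mm
    have h := S.comm (J x) (J (u' i)) (J (u i)) mm (-1)
    rw [hpt x, zero_mul, ZMod.val_zero, pow_zero, one_smul] at h
    rw [finsum_eq_add01 _ (by
      intro j hj
      rw [hcurm x (u' i) (j : ℤ) (by exact_mod_cast hj)]
      simp)] at h
    rw [zbinom_zero', zbinom_one'] at h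
    have e0 : mm + -1 - ((0 : ℕ) : ℤ) = mm - 1 := by push_cast; ring
    have e1 : mm + -1 - ((1 : ℕ) : ℤ) = mm - 2 := by push_cast; ring
    rw [e0, e1, one_smul] at h
    push_cast at h
    rw [sub_eq_iff_eq_add] at h
    rw [h]
    abel
  -- [J^x_(0) L'] = 0
  have hJL0 : ∀ x : g0, S.mul 0 (J x) L' = 0 := by
    intro x
    rw [hL', map_sum]
    have hterm : ∀ i : ι, S.mul 0 (J x) (S.mul (-1) (J (u' i)) (J (u i)))
        = S.mul (-1) (J (u' i)) (J ⁅x, u i⁆) + S.mul (-1) (J ⁅x, u' i⁆) (J (u i)) := by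
      intro i
      rw [hcomm0 x i 0, hcur0, hcur0]
      norm_num
    rw [Finset.sum_congr rfl fun i _ => hterm i, Finset.sum_add_distrib]
    have hsw := swap_bracket B u u' hBsym hBinv hdual (((S.mul (-1)).comp J).compl₂ J) x
    simp only [LinearMap.compl₂_apply, LinearMap.coe_comp, Function.comp_apply] at hsw
    rw [hsw]
    abel
  -- [J^x_(1) L'] = K • J x
  have hJL1 : ∀ x : g0, S.mul 1 (J x) L' = K • J x := by
    intro x
    have hmem := blocks_forall hdirect
      (p := LinearMap.eqLocus (((S.mul 1).flip L') ∘ₗ J) (K • J)) ?_ x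
    · simpa [LinearMap.mem_eqLocus, LinearMap.flip_apply, LinearMap.smul_apply] using hmem
    · intro s hs z hz
      simp only [LinearMap.mem_eqLocus, LinearMap.coe_comp, Function.comp_apply,
        LinearMap.flip_apply, LinearMap.smul_apply]
      rw [hL', map_sum]
      have hterm : ∀ i : ι, S.mul 1 (J z) (S.mul (-1) (J (u' i)) (J (u i)))
          = ((k + hv - r s) * B z (u i)) • J (u' i)
            + J ⁅⁅z, u' i⁆, u i⁆
            + ((k + hv - r s) * B z (u' i)) • J (u i) := by
        intro i
        have e := hcomm0 z i 1
        norm_num at e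
        rw [hA s hs z hz (u i), hA s hs z hz (u' i), hcur0, hcur0] at e
        rw [map_smul, S.vac_right, map_smul, LinearMap.smul_apply, S.vac_left_neg_one] at e
        exact e
      rw [Finset.sum_congr rfl fun i _ => hterm i, Finset.sum_add_distrib,
        Finset.sum_add_distrib]
      have h1 : ∑ i, ((k + hv - r s) * B z (u i)) • J (u' i) = (k + hv - r s) • J z := by
        calc ∑ i, ((k + hv - r s) * B z (u i)) • J (u' i)
            = (k + hv - r s) • J (∑ i, B z (u i) • u' i) := by
              rw [map_sum, Finset.smul_sum]
              exact Finset.sum_congr rfl fun i _ => by rw [map_smul, smul_smul]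
          _ = (k + hv - r s) • J z := by rw [hdual]
      have h2 : ∑ i, J ⁅⁅z, u' i⁆, u i⁆ = (2 * r s) • J z := by
        rw [← map_sum, hcas s hs z hz, map_smul]
      have h3 : ∑ i, ((k + hv - r s) * B z (u' i)) • J (u i) = (k + hv - r s) • J z := by
        calc ∑ i, ((k + hv - r s) * B z (u' i)) • J (u i)
            = (k + hv - r s) • J (∑ i, B z (u' i) • u i) := by
              rw [map_sum, Finset.smul_sum]
              exact Finset.sum_congr rfl fun i _ => by rw [map_smul, smul_smul]
          _ = (k + hv - r s) • J z := by rw [hd']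
      rw [h1, h2, h3, hK]
      module
  -- [J^x_(n) L'] = 0 for n ≥ 2
  have hJLge2 : ∀ x : g0, ∀ n : ℤ, 2 ≤ n → S.mul n (J x) L' = 0 := by
    intro x n hn
    rw [hL', map_sum]
    have h3 : ∀ i : ι, S.mul (n - 2) (S.mul 1 (J x) (J (u' i))) (J (u i)) = 0 := by
      intro i
      obtain ⟨c, hc⟩ := Submodule.mem_span_singleton.mp (hspan x (u' i))
      rw [← hc, map_smul, LinearMap.smul_apply, S.vac_left (J (u i)) (n - 2) (by omega)]
      simp
    have hterm : ∀ i : ι, S.mul n (J x) (S.mul (-1) (J (u' i)) (J (u i)))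
        = S.mul (n - 1) (J ⁅x, u' i⁆) (J (u i)) := by
      intro i
      rw [hcomm0 x i n, hcurm x (u i) n hn, hcur0, h3 i]
      simp
    rw [Finset.sum_congr rfl fun i _ => hterm i]
    rcases eq_or_lt_of_le hn with he | hlt
    · -- n = 2
      have hn2 : n - 1 = 1 := by omega
      rw [hn2]
      have hX1 := swap_bracket B u u' hBsym hBinv hdual (((S.mul 1).comp J).compl₂ J) x
      have hX2 := copair_symm B u u' hBsym hdual
        ((((S.mul 1).comp J).compl₂ J) ∘ₗ (LieAlgebra.ad ℂ g0 x))
      simp only [LinearMap.compl₂_apply, LinearMap.coe_comp, Function.comp_apply,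
        LieAlgebra.ad_apply] at hX1 hX2
      have hX3 : ∑ i, S.mul 1 (J (u' i)) (J ⁅x, u i⁆)
          = ∑ i, S.mul 1 (J ⁅x, u i⁆) (J (u' i)) :=
        Finset.sum_congr rfl fun i _ => hsym1 _ _
      have hXX : ∑ i, S.mul 1 (J ⁅x, u' i⁆) (J (u i))
          = - ∑ i, S.mul 1 (J ⁅x, u' i⁆) (J (u i)) := by
        conv_lhs => rw [hX1, hX3, ← hX2]
      have h4 : (2 : ℂ) • ∑ i, S.mul 1 (J ⁅x, u' i⁆) (J (u i)) = 0 := by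
        rw [two_smul]
        nth_rewrite 2 [hXX]
        rw [add_neg_cancel]
      exact (smul_eq_zero.mp h4).resolve_left two_ne_zero
    · refine Finset.sum_eq_zero fun i _ => hcurm _ _ (n - 1) (by omega)
  -- skew symmetry: L' against currents
  have hskewLJ : ∀ (x : g0) (n : ℤ), S.mul n L' (J x) =
      ∑ᶠ j : ℕ, ((-1 : ℂ) ^ (n + (j : ℤ) + 1)) •
        (((Nat.factorial j : ℂ))⁻¹ • (S.T ^ j) (S.mul (n + (j : ℤ)) (J x) L')) := by
    intro x n
    have h := S.skew L' (J x) n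
    rw [hpt x, mul_zero, ZMod.val_zero, pow_zero, one_smul] at h
    exact h
  have hLJ0 : ∀ x : g0, S.mul 0 L' (J x) = K • S.T (J x) := by
    intro x
    rw [hskewLJ x 0]
    rw [finsum_eq_add01 _ (by
      intro j hj
      rw [hJLge2 x ((0 : ℤ) + (j : ℤ)) (by omega)]
      simp)]
    rw [show ((0 : ℤ) + ((0 : ℕ) : ℤ)) = 0 from by norm_num,
      show ((0 : ℤ) + ((1 : ℕ) : ℤ)) = 1 from by norm_num]
    rw [hJL0 x, hJL1 x]
    norm_num
  have hLJ1 : ∀ x : g0, S.mul 1 L' (J x) = K • J x := by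
    intro x
    rw [hskewLJ x 1]
    rw [finsum_eq_add01 _ (by
      intro j hj
      rw [hJLge2 x ((1 : ℤ) + (j : ℤ)) (by omega)]
      simp)]
    rw [show ((1 : ℤ) + ((0 : ℕ) : ℤ)) = 1 from by norm_num,
      show ((1 : ℤ) + ((1 : ℕ) : ℤ)) = 2 from by norm_num]
    rw [hJL1 x, hJLge2 x 2 le_rfl]
    norm_num
  have hLJge2 : ∀ (x : g0) (n : ℤ), 2 ≤ n → S.mul n L' (J x) = 0 := by
    intro x n hn
    rw [hskewLJ x n]
    have hz : ∀ j : ℕ, ((-1 : ℂ) ^ (n + (j : ℤ) + 1)) •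
        (((Nat.factorial j : ℂ))⁻¹ • (S.T ^ j) (S.mul (n + (j : ℤ)) (J x) L')) = 0 := by
      intro j
      rw [hJLge2 x (n + (j : ℤ)) (by omega)]
      simp
    calc ∑ᶠ j : ℕ, ((-1 : ℂ) ^ (n + (j : ℤ) + 1)) •
        (((Nat.factorial j : ℂ))⁻¹ • (S.T ^ j) (S.mul (n + (j : ℤ)) (J x) L'))
        = ∑ᶠ _ : ℕ, (0 : V) := finsum_congr hz
      _ = 0 := finsum_zero
  -- commutator of L' with quadratic terms
  have hcommL : ∀ (i : ι) (n : ℤ),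
      S.mul n L' (S.mul (-1) (J (u' i)) (J (u i))) =
        S.mul (-1) (J (u' i)) (S.mul n L' (J (u i)))
          + K • S.mul (n - 2) (J (u' i)) (J (u i)) := by
    intro i n
    have h := S.comm L' (J (u' i)) (J (u i)) n (-1)
    rw [hpt (u' i), mul_zero, ZMod.val_zero, pow_zero, one_smul] at h
    rw [finsum_eq_add01 _ (by
      intro j hj
      rw [hLJge2 (u' i) (j : ℤ) (by exact_mod_cast hj)]
      simp)] at h
    rw [zbinom_zero', zbinom_one', one_smul] at h
    have e0 : n + -1 - ((0 : ℕ) : ℤ) = n - 1 := by push_cast; ring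
    have e1 : n + -1 - ((1 : ℕ) : ℤ) = n - 2 := by push_cast; ring
    rw [e0, e1] at h
    push_cast at h
    rw [hLJ0 (u' i), hLJ1 (u' i)] at h
    rw [map_smul, LinearMap.smul_apply, S.T_left, map_smul, LinearMap.smul_apply] at h
    rw [sub_eq_iff_eq_add] at h
    rw [h, hK]
    have e2 : n - 1 - 1 = n - 2 := by ring
    rw [e2]
    push_cast
    module
  -- L' against L'
  have hLL : ∀ n : ℤ, S.mul n L' L' =
      (∑ i, S.mul (-1) (J (u' i)) (S.mul n L' (J (u i))))
        + K • ∑ i, S.mul (n - 2) (J (u' i)) (J (u i)) := by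
    intro n
    rw [show S.mul n L' L' = S.mul n L' (∑ i, S.mul (-1) (J (u' i)) (J (u i))) from by
      rw [← hL']]
    rw [map_sum, Finset.sum_congr rfl fun i _ => hcommL i n, Finset.sum_add_distrib,
      Finset.smul_sum]
  -- central term
  have hsum1 : (∑ i, S.mul 1 (J (u' i)) (J (u i))) ∈ (ℂ ∙ S.vac) :=
    Submodule.sum_mem _ fun i _ => hspan (u' i) (u i)
  obtain ⟨C, hC⟩ := Submodule.mem_span_singleton.mp hsum1
  -- translate of L'
  have hTL' : S.T L' = (∑ i, S.mul (-2) (J (u' i)) (J (u i)))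
      + ∑ i, S.mul (-1) (J (u' i)) (S.T (J (u i))) := by
    rw [hL', map_sum, Finset.sum_congr rfl fun i _ => S.T_der (J (u' i)) (J (u i)) (-1),
      Finset.sum_add_distrib]
    congr 1
    refine Finset.sum_congr rfl fun i _ => ?_
    rw [S.T_left]
    norm_num
  -- the identities for L'
  have hLL0 : S.mul 0 L' L' = K • S.T L' := by
    have h := hLL 0
    rw [show (0 : ℤ) - 2 = -2 from by ring] at h
    have h2 : ∀ i : ι, S.mul (-1) (J (u' i)) (S.mul 0 L' (J (u i)))
        = K • S.mul (-1) (J (u' i)) (S.T (J (u i))) := by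
      intro i; rw [hLJ0 (u i), map_smul]
    rw [Finset.sum_congr rfl fun i _ => h2 i, ← Finset.smul_sum] at h
    rw [h, hTL']
    module
  have hLL1 : S.mul 1 L' L' = (2 * K) • L' := by
    have h := hLL 1
    rw [show (1 : ℤ) - 2 = -1 from by ring] at h
    have h2 : ∀ i : ι, S.mul (-1) (J (u' i)) (S.mul 1 L' (J (u i)))
        = K • S.mul (-1) (J (u' i)) (J (u i)) := by
      intro i; rw [hLJ1 (u i), map_smul]
    rw [Finset.sum_congr rfl fun i _ => h2 i, ← Finset.smul_sum, ← hL'] at h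
    rw [h]
    module
  have hLL2 : S.mul 2 L' L' = 0 := by
    have h := hLL 2
    rw [show (2 : ℤ) - 2 = 0 from by ring] at h
    have h2 : ∀ i : ι, S.mul (-1) (J (u' i)) (S.mul 2 L' (J (u i))) = 0 := by
      intro i; rw [hLJge2 (u i) 2 le_rfl, map_zero]
    have h3 : ∑ i, S.mul 0 (J (u' i)) (J (u i)) = 0 := by
      rw [Finset.sum_congr rfl fun i _ => hcur0 (u' i) (u i), ← map_sum, hzero, map_zero]
    rw [Finset.sum_congr rfl fun i _ => h2 i, h3] at h
    simpa using h
  have hLL3 : S.mul 3 L' L' = (K * C) • S.vac := by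
    have h := hLL 3
    rw [show (3 : ℤ) - 2 = 1 from by ring] at h
    have h2 : ∀ i : ι, S.mul (-1) (J (u' i)) (S.mul 3 L' (J (u i))) = 0 := by
      intro i; rw [hLJge2 (u i) 3 (by norm_num), map_zero]
    rw [Finset.sum_congr rfl fun i _ => h2 i, ← hC] at h
    simpa [smul_smul] using h
  have hLL4 : ∀ n : ℤ, 4 ≤ n → S.mul n L' L' = 0 := by
    intro n hn
    have h := hLL n
    have h2 : ∀ i : ι, S.mul (-1) (J (u' i)) (S.mul n L' (J (u i))) = 0 := by
      intro i; rw [hLJge2 (u i) n (by omega), map_zero]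
    have h3 : ∀ i : ι, S.mul (n - 2) (J (u' i)) (J (u i)) = 0 :=
      fun i => hcurm _ _ _ (by omega)
    rw [Finset.sum_congr rfl fun i _ => h2 i, Finset.sum_congr rfl fun i _ => h3 i] at h
    simpa using h
  -- conclude
  have hmulsm : ∀ n : ℤ, S.mul n (K⁻¹ • L') (K⁻¹ • L')
      = (K⁻¹ * K⁻¹) • S.mul n L' L' := by
    intro n; simp only [map_smul, LinearMap.smul_apply, smul_smul]
  refine ⟨2 * K⁻¹ * C, ?_, ?_, ?_, ?_, ?_⟩
  · rw [hmulsm, hLL0, map_smul, smul_smul]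
    congr 1
    field_simp
  · rw [hmulsm, hLL1, smul_smul, smul_smul]
    congr 1
    field_simp
  · rw [hmulsm, hLL2, smul_zero]
  · rw [hmulsm, hLL3, smul_smul]
    congr 1
    field_simp
  · intro mm hmm
    rw [hmulsm, hLL4 mm hmm, smul_zero]
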